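/- Suppose each vertex monoid M_α satisfies the ascending chain condition on principal left ideals. Let {w_i : i ∈ ℕ} be a set of complete blocks in X*, all of the same length n and containing no left invertible letters, such that GP[w_1] ⊆ GP[w_2] ⊆ ⋯. Then this chain of principal left ideals terminates, i.e. there is d with GP[w_d] = GP[w_{d+k}] for all k ≥ 1. -/

import Mathlib

/-! Common definitions for graph products of monoids. -/

variable {V : Type*}

/-- A letter of the graph product alphabet: an element of one of the vertex monoids,
tagged by its vertex (its *support*). -/
abbrev GPLetter (M : V → Type*) : Type _ := (α : V) × M α

/-- The defining relations of the graph product: identity letters are trivial,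
letters from the same vertex monoid multiply, and letters at adjacent vertices commute. -/
def gpRel (G : SimpleGraph V) (M : V → Type*) [∀ α, Monoid (M α)] :
    FreeMonoid (GPLetter M) → FreeMonoid (GPLetter M) → Prop := fun w₁ w₂ =>
  (∃ α : V, w₁ = FreeMonoid.of (⟨α, (1 : M α)⟩ : GPLetter M) ∧ w₂ = 1) ∨
  (∃ (α : V) (x y : M α),
      w₁ = FreeMonoid.of (⟨α, x⟩ : GPLetter M) * FreeMonoid.of (⟨α, y⟩ : GPLetter M) ∧
      w₂ = FreeMonoid.of (⟨α, x * y⟩ : GPLetter M)) ∨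
  (∃ (α β : V) (x : M α) (y : M β), G.Adj α β ∧
      w₁ = FreeMonoid.of (⟨α, x⟩ : GPLetter M) * FreeMonoid.of (⟨β, y⟩ : GPLetter M) ∧
      w₂ = FreeMonoid.of (⟨β, y⟩ : GPLetter M) * FreeMonoid.of (⟨α, x⟩ : GPLetter M))

/-- The congruence on the free monoid generated by the graph product relations. -/
def gpCon (G : SimpleGraph V) (M : V → Type*) [∀ α, Monoid (M α)] :
    Con (FreeMonoid (GPLetter M)) := conGen (gpRel G M)

/-- The graph product of the monoids `M α` with respect to the graph `G`. -/
abbrev GraphProduct (G : SimpleGraph V) (M : V → Type*) [∀ α, Monoid (M α)] :=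
  (gpCon G M).Quotient

/-- The class `[w]` in the graph product of a word `w` (given as a list of letters). -/
def gpMk (G : SimpleGraph V) (M : V → Type*) [∀ α, Monoid (M α)]
    (l : List (GPLetter M)) : GraphProduct G M :=
  (gpCon G M).mk' (FreeMonoid.ofList l)

/-- A word is reduced: no letter is an identity, and between any two letters with the
same support there is a letter whose support is not adjacent to it. -/
def GPReduced (G : SimpleGraph V) (M : V → Type*) [∀ α, Monoid (M α)]
    (l : List (GPLetter M)) : Prop :=
  (∀ x ∈ l, x.2 ≠ 1) ∧
    ∀ i j : Fin l.length, i < j → (l.get i).1 = (l.get j).1 →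
      ∃ k : Fin l.length, i < k ∧ k < j ∧ ¬ G.Adj (l.get i).1 (l.get k).1

/-- One shuffle: transpose an adjacent pair of letters whose supports are adjacent in `G`. -/
def ShuffleStep (G : SimpleGraph V) (M : V → Type*)
    (l₁ l₂ : List (GPLetter M)) : Prop :=
  ∃ (u v : List (GPLetter M)) (x y : GPLetter M),
    G.Adj x.1 y.1 ∧ l₁ = u ++ x :: y :: v ∧ l₂ = u ++ y :: x :: v

/-- Two words are shuffle equivalent if one is obtained from the other by a finite
sequence of shuffles. -/
def ShuffleEquiv (G : SimpleGraph V) (M : V → Type*) :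
    List (GPLetter M) → List (GPLetter M) → Prop :=
  Relation.ReflTransGen (ShuffleStep G M)

/-- A letter is left invertible if it is left invertible in its vertex monoid. -/
def LeftInvertibleLetter (M : V → Type*) [∀ α, Monoid (M α)] (x : GPLetter M) : Prop :=
  ∃ y : M x.1, y * x.2 = 1

/-- The set of supports of the letters of a word. -/
def suppSet (M : V → Type*) (l : List (GPLetter M)) : Set V := {α | ∃ x ∈ l, x.1 = α}

/-- A complete block: a reduced word whose support induces a complete subgraph of `G`. -/
def CompleteBlock (G : SimpleGraph V) (M : V → Type*) [∀ α, Monoid (M α)]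
    (l : List (GPLetter M)) : Prop :=
  GPReduced G M l ∧ ∀ x ∈ l, ∀ y ∈ l, x.1 ≠ y.1 → G.Adj x.1 y.1

/-- A list of blocks is a left Foata normal form: the concatenation is reduced, each
block is nonempty with complete support, and each letter of a block fails to be
adjacent to some letter of the preceding block. -/
def LeftFoataForm (G : SimpleGraph V) (M : V → Type*) [∀ α, Monoid (M α)]
    (blocks : List (List (GPLetter M))) : Prop :=
  GPReduced G M blocks.flatten ∧
  (∀ b ∈ blocks, b ≠ [] ∧ ∀ x ∈ b, ∀ y ∈ b, x.1 ≠ y.1 → G.Adj x.1 y.1) ∧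
  List.Chain' (fun b₁ b₂ => ∀ y ∈ b₂, ∃ x ∈ b₁, ¬ G.Adj x.1 y.1) blocks

/-- The principal left ideal `S a = {s * a : s ∈ S}` of a monoid. -/
def plIdeal {S : Type*} [Monoid S] (a : S) : Set S := Set.range (· * a)

/-- The ascending chain condition on principal left ideals. -/
def ACCPL (S : Type*) [Monoid S] : Prop :=
  ∀ a : ℕ → S, (∀ n, plIdeal (a n) ⊆ plIdeal (a (n + 1))) →
    ∃ n, ∀ k, plIdeal (a (n + k)) = plIdeal (a n)

/-- `A` is a left ideal of the monoid `S`. -/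
def IsLeftIdeal {S : Type*} [Monoid S] (A : Set S) : Prop :=
  A.Nonempty ∧ ∀ s : S, ∀ a ∈ A, s * a ∈ A

/-- `A` is generated, as a left ideal, by a finite subset of itself. -/
def IsFGLeftIdeal {S : Type*} [Monoid S] (A : Set S) : Prop :=
  ∃ F : Finset S, ↑F ⊆ A ∧ A = {x | ∃ s : S, ∃ a ∈ F, x = s * a}

/-- A monoid is weakly left noetherian if every left ideal is finitely generated. -/
def WeaklyLeftNoetherian (S : Type*) [Monoid S] : Prop :=
  ∀ A : Set S, IsLeftIdeal A → IsFGLeftIdeal A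

/-- A monoid is left ideal Howson if the intersection of any two principal left ideals
is empty or finitely generated. -/
def LeftIdealHowson (S : Type*) [Monoid S] : Prop :=
  ∀ a b : S, plIdeal a ∩ plIdeal b = ∅ ∨ IsFGLeftIdeal (plIdeal a ∩ plIdeal b)

/-- An LCM monoid: intersections of principal left ideals are empty or principal. -/
def LCMMonoid (S : Type*) [Monoid S] : Prop :=
  ∀ a b : S, plIdeal a ∩ plIdeal b = ∅ ∨ ∃ c : S, plIdeal a ∩ plIdeal b = plIdeal c

/-- A left congruence on a monoid. -/
def IsLeftCongruence {S : Type*} [Monoid S] (ρ : S → S → Prop) : Prop :=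
  Equivalence ρ ∧ ∀ u s t : S, ρ s t → ρ (u * s) (u * t)

/-- The least left congruence containing a set of pairs. -/
def leftConGen {S : Type*} [Monoid S] (R : Set (S × S)) : S → S → Prop := fun s t =>
  ∀ ρ : S → S → Prop, IsLeftCongruence ρ → (∀ p ∈ R, ρ p.1 p.2) → ρ s t

/-- A monoid is finitely left equated if every left annihilator `l(a)` is the left
congruence generated by a finite set. -/
def FinitelyLeftEquated (S : Type*) [Monoid S] : Prop :=
  ∀ a : S, ∃ R : Set (S × S), R.Finite ∧ ∀ s t : S, s * a = t * a ↔ leftConGen R s t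

/-- A monoid is a group: every element has a two-sided inverse. -/
def IsGroupMonoid (S : Type*) [Monoid S] : Prop :=
  ∀ a : S, ∃ b : S, a * b = 1 ∧ b * a = 1

/-- Weakly left coherent: left ideal Howson and finitely left equated. -/
def WeaklyLeftCoherent (S : Type*) [Monoid S] : Prop :=
  LeftIdealHowson S ∧ FinitelyLeftEquated S

/-- The restricted direct product of a family of monoids: elements of the direct
product with only finitely many non-identity coordinates. -/
def restrictedDirectProduct {ι : Type*} (M : ι → Type*) [∀ i, Monoid (M i)] :
    Submonoid (∀ i, M i) where
  carrier := {f | {i | f i ≠ 1}.Finite}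
  one_mem' := by simp
  mul_mem' := by
    intro f g hf hg
    refine Set.Finite.subset (hf.union hg) ?_
    intro i hi
    rw [Set.mem_union]
    by_contra h
    push_neg at h
    obtain ⟨h1, h2⟩ := h
    simp only [Set.mem_setOf_eq, not_not] at h1 h2
    apply hi
    show f i * g i = 1
    rw [h1, h2, one_mul]

/-- Condition (i) for relative completeness: both monoids have two elements, at least
one is not a group, and both vertices are adjacent to every other vertex. -/
def RCcondI (G : SimpleGraph V) (M : V → Type*) [∀ α, Monoid (M α)]
    (α β : V) : Prop :=
  Nat.card (M α) = 2 ∧ Nat.card (M β) = 2 ∧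
  (¬ IsGroupMonoid (M α) ∨ ¬ IsGroupMonoid (M β)) ∧
  ∀ γ : V, γ ≠ α → γ ≠ β → G.Adj α γ ∧ G.Adj β γ

/-- `G` is relatively complete with respect to the family `M` of vertex monoids. -/
def RelativelyComplete (G : SimpleGraph V) (M : V → Type*)
    [∀ α, Monoid (M α)] : Prop :=
  (∀ α β : V, α ≠ β → ¬ G.Adj α β →
      RCcondI G M α β ∨ (IsGroupMonoid (M α) ∧ IsGroupMonoid (M β))) ∧
  ∀ α β α' β' : V, α ≠ β → ¬ G.Adj α β → RCcondI G M α β →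
    α' ≠ β' → ¬ G.Adj α' β' → RCcondI G M α' β' →
    (α = α' ∧ β = β') ∨ (α = β' ∧ β = α')


section Aux
variable (G : SimpleGraph V) (M : V → Type*) [∀ α, Monoid (M α)]

open Classical in
noncomputable def gpProj (α : V) (x : GPLetter M) : M α :=
  if h : x.1 = α then h ▸ x.2 else 1

lemma gpProj_self (x : GPLetter M) : gpProj M x.1 x = x.2 := by
  obtain ⟨a, b⟩ := x
  simp [gpProj]

lemma gpProj_same (α : V) (x : M α) : gpProj M α ⟨α, x⟩ = x := gpProj_self M ⟨α, x⟩

lemma gpProj_ne {α : V} {x : GPLetter M} (h : x.1 ≠ α) : gpProj M α x = 1 := by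
  simp [gpProj, h]

noncomputable def gpProjFree (α : V) : FreeMonoid (GPLetter M) →* M α :=
  FreeMonoid.lift (gpProj M α)

lemma gpCon_le_ker (α : V) : gpCon G M ≤ Con.ker (gpProjFree M α) := by
  apply Con.conGen_le.mpr
  rintro u v (⟨β, rfl, rfl⟩ | ⟨β, x, y, rfl, rfl⟩ | ⟨β, γ, x, y, hadj, rfl, rfl⟩) <;>
    rw [Con.ker_rel] <;>
    simp only [map_mul, map_one, gpProjFree, FreeMonoid.lift_eval_of]
  · by_cases h : β = α
    · subst h; rw [gpProj_same]
    · rw [gpProj_ne M h]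
  · by_cases h : β = α
    · subst h; rw [gpProj_same, gpProj_same, gpProj_same]
    · rw [gpProj_ne M h, gpProj_ne M h, gpProj_ne M h, one_mul]
  · by_cases h : β = α
    · have h' : γ ≠ α := by rintro rfl; exact hadj.ne h
      rw [gpProj_ne M (x := ⟨γ, y⟩) h', one_mul, mul_one]
    · rw [gpProj_ne M (x := ⟨β, x⟩) h, one_mul, mul_one]

noncomputable def gpPi (α : V) : GraphProduct G M →* M α :=
  Con.lift _ (gpProjFree M α) (gpCon_le_ker G M α)

lemma gpPi_gpMk (α : V) (l : List (GPLetter M)) :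
    gpPi G M α (gpMk G M l) = (l.map (gpProj M α)).prod := by
  rw [gpMk, gpPi, Con.lift_mk', gpProjFree, FreeMonoid.lift_apply, FreeMonoid.toList_ofList]

lemma gpPi_eq_one {α : V} {l : List (GPLetter M)} (h : ∀ x ∈ l, x.1 ≠ α) :
    gpPi G M α (gpMk G M l) = 1 := by
  rw [gpPi_gpMk]
  apply List.prod_eq_one
  intro x hx
  obtain ⟨y, hy, rfl⟩ := List.mem_map.mp hx
  exact gpProj_ne M (h y hy)

lemma prod_proj_eq : ∀ {l : List (GPLetter M)}, ((l.map Sigma.fst).Nodup) →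
    ∀ {y : GPLetter M}, y ∈ l → (l.map (gpProj M y.1)).prod = y.2 := by
  intro l
  induction l with
  | nil => intro _ y hy; cases hy
  | cons x t ih =>
    intro hnd y hy
    rw [List.map_cons, List.nodup_cons] at hnd
    rw [List.map_cons, List.prod_cons]
    rcases List.mem_cons.mp hy with rfl | hyt
    · rw [gpProj_self]
      have h1 : (t.map (gpProj M y.1)).prod = 1 := by
        apply List.prod_eq_one
        intro z hz
        obtain ⟨s, hs, rfl⟩ := List.mem_map.mp hz
        refine gpProj_ne M fun h => ?_
        exact hnd.1 (h ▸ List.mem_map.mpr ⟨s, hs, rfl⟩)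
      rw [h1, mul_one]
    · have hne : x.1 ≠ y.1 := fun h => hnd.1 (h ▸ List.mem_map.mpr ⟨y, hyt, rfl⟩)
      rw [gpProj_ne M hne, one_mul]
      exact ih hnd.2 hyt

lemma gpPi_eq_letter {l : List (GPLetter M)} (hnd : (l.map Sigma.fst).Nodup)
    {y : GPLetter M} (hy : y ∈ l) : gpPi G M y.1 (gpMk G M l) = y.2 := by
  rw [gpPi_gpMk]; exact prod_proj_eq M hnd hy
end Aux

section Aux2
variable (G : SimpleGraph V) (M : V → Type*) [∀ α, Monoid (M α)]

lemma gpMk_append (l₁ l₂ : List (GPLetter M)) :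
    gpMk G M (l₁ ++ l₂) = gpMk G M l₁ * gpMk G M l₂ := by
  rw [gpMk, gpMk, gpMk, ← map_mul]
  rfl

lemma gpMk_cons (x : GPLetter M) (l : List (GPLetter M)) :
    gpMk G M (x :: l) = gpMk G M [x] * gpMk G M l := by
  rw [← gpMk_append]; rfl

lemma gpMk_swap {x y : GPLetter M} (hadj : G.Adj x.1 y.1) (t : List (GPLetter M)) :
    gpMk G M (x :: y :: t) = gpMk G M (y :: x :: t) := by
  have h2 : gpMk G M [x, y] = gpMk G M [y, x] := by
    apply (Con.eq _).mpr
    apply ConGen.Rel.of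
    exact Or.inr (Or.inr ⟨x.1, y.1, x.2, y.2, hadj, rfl, rfl⟩)
  rw [show x :: y :: t = [x, y] ++ t from rfl, show y :: x :: t = [y, x] ++ t from rfl,
    gpMk_append, gpMk_append, h2]

lemma gpMk_merge (α : V) (a b : M α) (t : List (GPLetter M)) :
    gpMk G M (⟨α, a⟩ :: ⟨α, b⟩ :: t) = gpMk G M (⟨α, a * b⟩ :: t) := by
  have h2 : gpMk G M [⟨α, a⟩, ⟨α, b⟩] = gpMk G M [⟨α, a * b⟩] := by
    apply (Con.eq _).mpr
    apply ConGen.Rel.of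
    exact Or.inr (Or.inl ⟨α, a, b, rfl, rfl⟩)
  rw [show (⟨α, a⟩ :: ⟨α, b⟩ :: t : List (GPLetter M)) = [⟨α, a⟩, ⟨α, b⟩] ++ t from rfl,
    gpMk_append, h2, ← gpMk_append]
  rfl

lemma gpMk_move (x : GPLetter M) (v : List (GPLetter M)) :
    ∀ u : List (GPLetter M), (∀ y ∈ u, G.Adj x.1 y.1) →
      gpMk G M (u ++ x :: v) = gpMk G M (x :: (u ++ v)) := by
  intro u
  induction u with
  | nil => intro _; rfl
  | cons y u' ih =>
    intro h
    have h1 : gpMk G M ((y :: u') ++ x :: v) = gpMk G M [y] * gpMk G M (u' ++ x :: v) := by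
      rw [show (y :: u') ++ x :: v = y :: (u' ++ x :: v) from rfl, gpMk_cons]
    rw [h1, ih (fun z hz => h z (List.mem_cons_of_mem _ hz)), ← gpMk_cons,
      show (y :: x :: (u' ++ v) : List (GPLetter M)) = y :: x :: (u' ++ v) from rfl]
    have hadj : G.Adj y.1 x.1 := (h y (List.mem_cons_self)).symm
    rw [gpMk_swap G M hadj]
    rfl

lemma gpMk_perm : ∀ {l l' : List (GPLetter M)}, l.Perm l' → ((l.map Sigma.fst).Nodup) →
    (∀ x ∈ l, ∀ y ∈ l, x.1 ≠ y.1 → G.Adj x.1 y.1) → gpMk G M l = gpMk G M l' := by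
  intro l l' p
  induction p with
  | nil => intro _ _; rfl
  | cons x p ih =>
    intro hnd hadj
    rw [List.map_cons, List.nodup_cons] at hnd
    rw [gpMk_cons, gpMk_cons,
      ih hnd.2 (fun a ha b hb hab => hadj a (List.mem_cons_of_mem _ ha)
        b (List.mem_cons_of_mem _ hb) hab), ← gpMk_append, ← gpMk_append]
    rfl
  | swap x y t =>
    intro hnd hadj
    have hne : y.1 ≠ x.1 := by
      rw [List.map_cons, List.map_cons, List.nodup_cons] at hnd
      exact fun h => hnd.1 (h ▸ List.mem_cons_self)
    exact gpMk_swap G M (hadj y (List.mem_cons_self)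
      x (List.mem_cons_of_mem _ (List.mem_cons_self)) hne) t
  | trans p₁ p₂ ih₁ ih₂ =>
    intro hnd hadj
    rw [ih₁ hnd hadj]
    exact ih₂ ((p₁.map Sigma.fst).nodup_iff.mp hnd)
      (fun a ha b hb hab => hadj a (p₁.mem_iff.mpr ha) b (p₁.mem_iff.mpr hb) hab)

lemma gpMk_interleave (f : (x : GPLetter M) → M x.1) :
    ∀ l : List (GPLetter M), ((l.map Sigma.fst).Nodup) →
      (∀ x ∈ l, ∀ y ∈ l, x.1 ≠ y.1 → G.Adj x.1 y.1) →
      gpMk G M ((l.map fun x => (⟨x.1, f x⟩ : GPLetter M)) ++ l)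
        = gpMk G M (l.map fun x => (⟨x.1, f x * x.2⟩ : GPLetter M)) := by
  intro l
  induction l with
  | nil => intro _ _; rfl
  | cons x t ih =>
    intro hnd hadj
    rw [List.map_cons, List.nodup_cons] at hnd
    have hmove : gpMk G M ((t.map fun s => (⟨s.1, f s⟩ : GPLetter M)) ++ x :: t)
        = gpMk G M (x :: ((t.map fun s => (⟨s.1, f s⟩ : GPLetter M)) ++ t)) := by
      apply gpMk_move
      intro y hy
      obtain ⟨s, hs, rfl⟩ := List.mem_map.mp hy
      have hne : x.1 ≠ s.1 := fun h => hnd.1 (h ▸ List.mem_map.mpr ⟨s, hs, rfl⟩)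
      exact hadj x (List.mem_cons_self) s (List.mem_cons_of_mem _ hs) hne
    calc gpMk G M (((x :: t).map fun s => (⟨s.1, f s⟩ : GPLetter M)) ++ x :: t)
        = gpMk G M [(⟨x.1, f x⟩ : GPLetter M)]
            * gpMk G M ((t.map fun s => (⟨s.1, f s⟩ : GPLetter M)) ++ x :: t) := by
          rw [← gpMk_cons]; rfl
      _ = gpMk G M [(⟨x.1, f x⟩ : GPLetter M)]
            * gpMk G M (x :: ((t.map fun s => (⟨s.1, f s⟩ : GPLetter M)) ++ t)) := by
          rw [hmove]
      _ = gpMk G M ((⟨x.1, f x⟩ : GPLetter M) :: (⟨x.1, x.2⟩ : GPLetter M)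
            :: ((t.map fun s => (⟨s.1, f s⟩ : GPLetter M)) ++ t)) := by
          rw [← gpMk_append]
          rfl
      _ = gpMk G M ((⟨x.1, f x * x.2⟩ : GPLetter M)
            :: ((t.map fun s => (⟨s.1, f s⟩ : GPLetter M)) ++ t)) := by
          rw [gpMk_merge]
      _ = gpMk G M ((x :: t).map fun s => (⟨s.1, f s * s.2⟩ : GPLetter M)) := by
          rw [gpMk_cons, ih hnd.2 (fun a ha b hb hab => hadj a (List.mem_cons_of_mem _ ha)
            b (List.mem_cons_of_mem _ hb) hab), ← gpMk_append]
          rfl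
end Aux2

section Aux3
variable (G : SimpleGraph V) (M : V → Type*) [∀ α, Monoid (M α)]

lemma completeBlock_nodup {l : List (GPLetter M)} (h : CompleteBlock G M l) :
    (l.map Sigma.fst).Nodup := by
  have key : ∀ m : ℕ, ∀ i j : Fin l.length, i < j → (j : ℕ) - (i : ℕ) ≤ m →
      (l.get i).1 ≠ (l.get j).1 := by
    intro m
    induction m with
    | zero =>
      intro i j hij hle
      have : (i : ℕ) < (j : ℕ) := hij
      omega
    | succ m ih =>
      intro i j hij hle heq
      obtain ⟨k, hik, hkj, hna⟩ := h.1.2 i j hij heq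
      have heq2 : (l.get i).1 = (l.get k).1 := by
        by_contra hne
        exact hna (h.2 (l.get i) (l.get_mem i) (l.get k) (l.get_mem k) hne)
      have h1 : (i : ℕ) < (k : ℕ) := hik
      have h2 : (k : ℕ) < (j : ℕ) := hkj
      exact ih i k hik (by omega) heq2
  have hp : l.Pairwise fun a b => a.1 ≠ b.1 :=
    List.pairwise_iff_get.mpr fun i j hij => key l.length i j hij (by omega)
  exact List.pairwise_map.mpr hp

end Aux3

/-- ascending chains of principal left ideals generated by complete blocks
of fixed length with no left invertible letters terminate, provided each vertex monoid
satisfies ACCPL. -/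
theorem stmt7 {V : Type*} (G : SimpleGraph V) (M : V → Type*) [∀ α, Monoid (M α)]
    (hacc : ∀ α : V, ACCPL (M α)) (n : ℕ) (w : ℕ → List (GPLetter M))
    (hw : ∀ i, CompleteBlock G M (w i)) (hlen : ∀ i, (w i).length = n)
    (hninv : ∀ i, ∀ x ∈ w i, ¬ LeftInvertibleLetter M x)
    (hchain : ∀ i, plIdeal (gpMk G M (w i)) ⊆ plIdeal (gpMk G M (w (i + 1)))) :
    ∃ d, ∀ k, plIdeal (gpMk G M (w (d + k))) = plIdeal (gpMk G M (w d)) := by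
  classical
  set a : ∀ α : V, ℕ → M α := fun α i => gpPi G M α (gpMk G M (w i)) with ha
  have hstep : ∀ i, ∃ g, gpMk G M (w i) = g * gpMk G M (w (i + 1)) := by
    intro i
    obtain ⟨g, hg⟩ := hchain i ⟨1, one_mul _⟩
    exact ⟨g, hg.symm⟩
  have hachain : ∀ α i, ∃ c : M α, a α i = c * a α (i + 1) := by
    intro α i
    obtain ⟨g, hg⟩ := hstep i
    exact ⟨gpPi G M α g, by rw [ha]; simp only; rw [hg, map_mul]⟩
  have haideal : ∀ α, ∀ i, plIdeal (a α i) ⊆ plIdeal (a α (i + 1)) := by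
    intro α i x hx
    obtain ⟨s, hs⟩ := hx
    obtain ⟨c, hc⟩ := hachain α i
    refine ⟨s * c, ?_⟩
    show s * c * a α (i + 1) = x
    rw [mul_assoc, ← hc]
    exact hs
  have hnd : ∀ i, ((w i).map Sigma.fst).Nodup := fun i => completeBlock_nodup G M (hw i)
  set S : ℕ → Finset V := fun i => ((w i).map Sigma.fst).toFinset with hS
  have hmemS : ∀ i α, α ∈ S i ↔ ∃ y ∈ w i, y.1 = α := by
    intro i α
    rw [hS]
    simp only [List.mem_toFinset, List.mem_map]
  have hcard : ∀ i, (S i).card = n := by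
    intro i
    rw [hS]
    simp only
    rw [List.toFinset_card_of_nodup (hnd i), List.length_map, hlen i]
  -- value of a at a letter's support
  have haval : ∀ i, ∀ y ∈ w i, a y.1 i = y.2 := by
    intro i y hy
    rw [ha]
    exact gpPi_eq_letter G M (hnd i) hy
  have haone : ∀ i α, α ∉ S i → a α i = 1 := by
    intro i α hα
    rw [ha]
    apply gpPi_eq_one
    intro x hx hx1
    exact hα ((hmemS i α).mpr ⟨x, hx, hx1⟩)
  have hsub : ∀ i, S (i + 1) ⊆ S i := by
    intro i α hα
    by_contra hne
    obtain ⟨y, hy, rfl⟩ := (hmemS (i + 1) α).mp hα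
    obtain ⟨c, hc⟩ := hachain y.1 i
    rw [haone i y.1 hne, haval (i + 1) y hy] at hc
    exact hninv (i + 1) y hy ⟨c, hc.symm⟩
  have hSeq : ∀ i, S i = S 0 := by
    intro i
    induction i with
    | zero => rfl
    | succ i ih =>
      rw [← ih]
      exact Finset.eq_of_subset_of_card_le (hsub i) (by rw [hcard, hcard])
  choose N hN using fun α => hacc α (a α) (haideal α)
  set d : ℕ := (S 0).sup N with hd
  have hstab : ∀ α ∈ S 0, ∀ k, plIdeal (a α (d + k)) = plIdeal (a α d) := by
    intro α hα k
    have hle : N α ≤ d := Finset.le_sup hα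
    have e1 : d + k = N α + (d - N α + k) := by omega
    have e2 : d = N α + (d - N α) := by omega
    rw [e1, hN α (d - N α + k)]
    conv_rhs => rw [e2, hN α (d - N α)]
  refine ⟨d, fun k => ?_⟩
  -- the easy inclusion:
  have hup : ∀ m, plIdeal (gpMk G M (w d)) ⊆ plIdeal (gpMk G M (w (d + m))) := by
    intro m
    induction m with
    | zero => exact subset_rfl
    | succ m ih => exact ih.trans (hchain (d + m))
  -- the hard inclusion: construct g with gpMk (w (d+k)) = g * gpMk (w d)
  have hex : ∀ x ∈ w d, ∃ h : M x.1, a x.1 (d + k) = h * a x.1 d := by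
    intro x hx
    have hmem : x.1 ∈ S 0 := by
      rw [← hSeq d]
      exact (hmemS d x.1).mpr ⟨x, hx, rfl⟩
    have h1 : a x.1 (d + k) ∈ plIdeal (a x.1 d) := by
      rw [← hstab x.1 hmem k]
      exact ⟨1, one_mul _⟩
    obtain ⟨h, hh⟩ := h1
    exact ⟨h, hh.symm⟩
  set f : (x : GPLetter M) → M x.1 := fun x =>
    if hx : ∃ h : M x.1, a x.1 (d + k) = h * a x.1 d then hx.choose else 1 with hfdef
  have hf : ∀ x ∈ w d, a x.1 (d + k) = f x * a x.1 d := by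
    intro x hx
    rw [hfdef]
    simp only
    rw [dif_pos (hex x hx)]
    exact (hex x hx).choose_spec
  set z : List (GPLetter M) := (w d).map fun x => (⟨x.1, f x * x.2⟩ : GPLetter M) with hz
  have hzmap : z.map Sigma.fst = (w d).map Sigma.fst := by
    rw [hz, List.map_map]
    rfl
  have hznd : (z.map Sigma.fst).Nodup := by rw [hzmap]; exact hnd d
  have hzadj : ∀ p ∈ z, ∀ q ∈ z, p.1 ≠ q.1 → G.Adj p.1 q.1 := by
    intro p hp q hq hpq
    obtain ⟨x, hx, rfl⟩ := List.mem_map.mp hp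
    obtain ⟨y, hy, rfl⟩ := List.mem_map.mp hq
    exact (hw d).2 x hx y hy hpq
  have hstepA : gpMk G M (((w d).map fun x => (⟨x.1, f x⟩ : GPLetter M)) ++ w d)
      = gpMk G M z := gpMk_interleave G M f (w d) (hnd d) ((hw d).2)
  have hzsub : z ⊆ w (d + k) := by
    intro p hp
    obtain ⟨x, hx, rfl⟩ := List.mem_map.mp hp
    have hmem : x.1 ∈ S (d + k) := by
      rw [hSeq (d + k), ← hSeq d]
      exact (hmemS d x.1).mpr ⟨x, hx, rfl⟩
    obtain ⟨y, hy, hy1⟩ := (hmemS (d + k) x.1).mp hmem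
    obtain ⟨β, yv⟩ := y
    simp only at hy1
    subst hy1
    have hyval : a x.1 (d + k) = yv := haval (d + k) ⟨x.1, yv⟩ hy
    have : f x * x.2 = yv := by
      rw [← hyval, hf x hx, haval d x hx]
    rw [show (⟨x.1, f x * x.2⟩ : GPLetter M) = ⟨x.1, yv⟩ by rw [this]]
    exact hy
  have hzperm : z.Perm (w (d + k)) := by
    apply List.Subperm.perm_of_length_le
    · exact List.subperm_of_subset (List.Nodup.of_map Sigma.fst hznd) hzsub
    · rw [hz, List.length_map, hlen, hlen]
  have hstepB : gpMk G M z = gpMk G M (w (d + k)) := gpMk_perm G M hzperm hznd hzadj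
  have heq : gpMk G M (w (d + k))
      = gpMk G M ((w d).map fun x => (⟨x.1, f x⟩ : GPLetter M)) * gpMk G M (w d) := by
    rw [← gpMk_append, hstepA, hstepB]
  apply Set.Subset.antisymm
  · intro x hx
    obtain ⟨s, hs⟩ := hx
    refine ⟨s * gpMk G M ((w d).map fun x => (⟨x.1, f x⟩ : GPLetter M)), ?_⟩
    show s * gpMk G M ((w d).map fun x => (⟨x.1, f x⟩ : GPLetter M)) * gpMk G M (w d) = x
    rw [mul_assoc, ← heq]
    exact hs
  · exact hup k
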